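/- Let N ≥ 1, let ε₁,…,ε_N be real constants, let λ ∈ ℝ with λ ≠ 0, and let r₁,…,r_N : ℝ² → ℝ be smooth functions of (x,t) with 1 − r_m(x,t)/λ > 0 for all m and all (x,t), satisfying ∂_t r_i = [r_i − Σ_{m=1}^N ε_m r_m] ∂_x r_i for every i. Define μ(x,t) := Π_{m=1}^N (1 − r_m(x,t)/λ)^{−ε_m} (real powers of positive numbers) and a₁ := Σ_{m=1}^N ε_m r_m. Then ∂_t μ = ∂_x[(λ − a₁) μ] everywhere. -/

import Mathlib

open Real Set

/-- Partial derivative in the first variable. -/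
noncomputable def pdx (f : ℝ → ℝ → ℝ) (x t : ℝ) : ℝ := deriv (fun x' => f x' t) x

/-- Partial derivative in the second variable. -/
noncomputable def pdt (f : ℝ → ℝ → ℝ) (x t : ℝ) : ℝ := deriv (fun t' => f x t') t

/-- For solutions of the generalized ε-system `∂ₜ rᵢ = [rᵢ − Σ ε_m r_m] ∂ₓ rᵢ`, the
generating function `μ = Π (1 − r_m/λ)^{−ε_m}` satisfies `∂ₜ μ = ∂ₓ[(λ − a₁) μ]`,
where `a₁ = Σ ε_m r_m`. -/
theorem generating_function_of_conservation_laws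
    (N : ℕ) (hN : 1 ≤ N) (ε : Fin N → ℝ) (l : ℝ) (hl : l ≠ 0)
    (r : ℝ → ℝ → Fin N → ℝ)
    (hr : ContDiff ℝ (⊤ : ℕ∞) (fun p : ℝ × ℝ => r p.1 p.2))
    (hpos : ∀ (x t : ℝ) (m : Fin N), 0 < 1 - r x t m / l)
    (hsys : ∀ (i : Fin N) (x t : ℝ),
      pdt (fun x' t' => r x' t' i) x t
        = (r x t i - ∑ m, ε m * r x t m) * pdx (fun x' t' => r x' t' i) x t)
    (μ : ℝ → ℝ → ℝ)
    (hμ : ∀ x t : ℝ, μ x t = ∏ m, (1 - r x t m / l) ^ (-(ε m)))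
    (a1 : ℝ → ℝ → ℝ) (ha1 : ∀ x t : ℝ, a1 x t = ∑ m, ε m * r x t m) :
    ∀ x t : ℝ, pdt μ x t = pdx (fun x' t' => (l - a1 x' t') * μ x' t') x t := by
  intro x t
  -- smoothness of the partial functions
  have hCx : ∀ m : Fin N, ContDiff ℝ (⊤ : ℕ∞) (fun x' => r x' t m) := by
    intro m
    have h1 : ContDiff ℝ (⊤ : ℕ∞) (fun x' : ℝ => r x' t) :=
      hr.comp (contDiff_id.prodMk contDiff_const)
    exact (contDiff_pi.mp h1) m
  have hCt : ∀ m : Fin N, ContDiff ℝ (⊤ : ℕ∞) (fun t' => r x t' m) := by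
    intro m
    have h1 : ContDiff ℝ (⊤ : ℕ∞) (fun t' : ℝ => r x t' m ) := by
      have h2 : ContDiff ℝ (⊤ : ℕ∞) (fun t' : ℝ => r x t') :=
        hr.comp (contDiff_const.prodMk contDiff_id)
      exact (contDiff_pi.mp h2) m
    exact h1
  set Rx : Fin N → ℝ := fun m => deriv (fun x' => r x' t m) x with hRxdef
  set Rt : Fin N → ℝ := fun m => deriv (fun t' => r x t' m) t with hRtdef
  have hRx : ∀ m, HasDerivAt (fun x' => r x' t m) (Rx m) x := fun m =>
    (((hCx m).differentiable (by simp)) x).hasDerivAt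
  have hRt : ∀ m, HasDerivAt (fun t' => r x t' m) (Rt m) t := fun m =>
    (((hCt m).differentiable (by simp)) t).hasDerivAt
  have hne : ∀ m, (1 - r x t m / l) ≠ 0 := fun m => ne_of_gt (hpos x t m)
  -- derivatives of each factor
  have hfx : ∀ m : Fin N, HasDerivAt (fun x' => (1 - r x' t m / l) ^ (-(ε m)))
      ((-(ε m)) * (1 - r x t m / l) ^ (-(ε m) - 1) * (-(Rx m / l))) x := by
    intro m
    have h := (((hRx m).div_const l).const_sub 1).rpow_const (p := -(ε m)) (Or.inl (hne m))
    convert h using 1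
    ring
  have hft : ∀ m : Fin N, HasDerivAt (fun t' => (1 - r x t' m / l) ^ (-(ε m)))
      ((-(ε m)) * (1 - r x t m / l) ^ (-(ε m) - 1) * (-(Rt m / l))) t := by
    intro m
    have h := (((hRt m).div_const l).const_sub 1).rpow_const (p := -(ε m)) (Or.inl (hne m))
    convert h using 1
    ring
  -- derivative of μ in each variable
  have hμx : HasDerivAt (fun x' => μ x' t)
      (∑ m, (∏ j ∈ Finset.univ.erase m, (1 - r x t j / l) ^ (-(ε j))) •
        ((-(ε m)) * (1 - r x t m / l) ^ (-(ε m) - 1) * (-(Rx m / l)))) x := by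
    have key := HasDerivAt.fun_finsetProd (u := Finset.univ)
      (f := fun m x' => (1 - r x' t m / l) ^ (-(ε m)))
      (f' := fun m => (-(ε m)) * (1 - r x t m / l) ^ (-(ε m) - 1) * (-(Rx m / l)))
      (x := x) (fun m _ => hfx m)
    have heq : (fun x' => μ x' t)
        = fun x' => ∏ m, (1 - r x' t m / l) ^ (-(ε m)) := funext fun x' => hμ x' t
    rw [heq]
    exact key
  have hμt : HasDerivAt (fun t' => μ x t')
      (∑ m, (∏ j ∈ Finset.univ.erase m, (1 - r x t j / l) ^ (-(ε j))) •
        ((-(ε m)) * (1 - r x t m / l) ^ (-(ε m) - 1) * (-(Rt m / l)))) t := by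
    have key := HasDerivAt.fun_finsetProd (u := Finset.univ)
      (f := fun m t' => (1 - r x t' m / l) ^ (-(ε m)))
      (f' := fun m => (-(ε m)) * (1 - r x t m / l) ^ (-(ε m) - 1) * (-(Rt m / l)))
      (x := t) (fun m _ => hft m)
    have heq : (fun t' => μ x t')
        = fun t' => ∏ m, (1 - r x t' m / l) ^ (-(ε m)) := funext fun t' => hμ x t'
    rw [heq]
    exact key
  -- derivative of a1 in x
  have hax : HasDerivAt (fun x' => a1 x' t) (∑ m, ε m * Rx m) x := by
    have heq : (fun x' => a1 x' t) = fun x' => ∑ m, ε m * r x' t m :=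
      funext fun x' => ha1 x' t
    rw [heq]
    exact HasDerivAt.fun_sum (fun m _ => (hRx m).const_mul (ε m))
  -- derivative of the right-hand side
  have hrhs : HasDerivAt (fun x' => (l - a1 x' t) * μ x' t)
      ((-(∑ m, ε m * Rx m)) * μ x t + (l - a1 x t) *
        (∑ m, (∏ j ∈ Finset.univ.erase m, (1 - r x t j / l) ^ (-(ε j))) •
          ((-(ε m)) * (1 - r x t m / l) ^ (-(ε m) - 1) * (-(Rx m / l))))) x :=
    (hax.const_sub l).mul hμx
  have hLHS : pdt μ x t = ∑ m, (∏ j ∈ Finset.univ.erase m, (1 - r x t j / l) ^ (-(ε j))) •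
      ((-(ε m)) * (1 - r x t m / l) ^ (-(ε m) - 1) * (-(Rt m / l))) := hμt.deriv
  have hRHS : pdx (fun x' t' => (l - a1 x' t') * μ x' t') x t
      = (-(∑ m, ε m * Rx m)) * μ x t + (l - a1 x t) *
        (∑ m, (∏ j ∈ Finset.univ.erase m, (1 - r x t j / l) ^ (-(ε j))) •
          ((-(ε m)) * (1 - r x t m / l) ^ (-(ε m) - 1) * (-(Rx m / l)))) := hrhs.deriv
  rw [hLHS, hRHS]
  -- now a purely algebraic identity
  have hterm : ∀ m : Fin N,
      (∏ j ∈ Finset.univ.erase m, (1 - r x t j / l) ^ (-(ε j))) •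
        ((-(ε m)) * (1 - r x t m / l) ^ (-(ε m) - 1) * (-(Rt m / l)))
      = (-(ε m * Rx m)) * μ x t + (l - a1 x t) *
        ((∏ j ∈ Finset.univ.erase m, (1 - r x t j / l) ^ (-(ε j))) •
          ((-(ε m)) * (1 - r x t m / l) ^ (-(ε m) - 1) * (-(Rx m / l)))) := by
    intro m
    have hs : Rt m = (r x t m - ∑ k, ε k * r x t k) * Rx m := hsys m x t
    have hprod : μ x t = (1 - r x t m / l) ^ (-(ε m)) *
        ∏ j ∈ Finset.univ.erase m, (1 - r x t j / l) ^ (-(ε j)) := by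
      rw [hμ]
      exact (Finset.mul_prod_erase Finset.univ _ (Finset.mem_univ m)).symm
    have hpow : (1 - r x t m / l) ^ (-(ε m))
        = (1 - r x t m / l) ^ (-(ε m) - 1) * (1 - r x t m / l) := by
      have h2 := Real.rpow_add_one (hne m) (-(ε m) - 1)
      rw [sub_add_cancel] at h2
      exact h2
    rw [smul_eq_mul, smul_eq_mul, hs, hprod, hpow, ha1]
    field_simp
    ring
  calc (∑ m, (∏ j ∈ Finset.univ.erase m, (1 - r x t j / l) ^ (-(ε j))) •
        ((-(ε m)) * (1 - r x t m / l) ^ (-(ε m) - 1) * (-(Rt m / l))))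
      = ∑ m, ((-(ε m * Rx m)) * μ x t + (l - a1 x t) *
          ((∏ j ∈ Finset.univ.erase m, (1 - r x t j / l) ^ (-(ε j))) •
            ((-(ε m)) * (1 - r x t m / l) ^ (-(ε m) - 1) * (-(Rx m / l))))) :=
        Finset.sum_congr rfl (fun m _ => hterm m)
    _ = (-(∑ m, ε m * Rx m)) * μ x t + (l - a1 x t) *
        (∑ m, (∏ j ∈ Finset.univ.erase m, (1 - r x t j / l) ^ (-(ε j))) •
          ((-(ε m)) * (1 - r x t m / l) ^ (-(ε m) - 1) * (-(Rx m / l)))) := by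
        rw [Finset.sum_add_distrib, ← Finset.mul_sum, ← Finset.sum_mul]
        congr 1
        rw [← Finset.sum_neg_distrib]
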